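/- arXiv:2306.09614 — 3 statements merged into one kernel-verified Lean document; each statement's English description precedes it below -/
import Mathlib

section
/- For every node i, if 0 ≤ S i j ≤ 1 for all j, i ∉ N_u(i), and i ∉ N_v(i), then the GRACE denominator dominates the HomoGCL denominator: exp(θ(u i)(v i)/τ) + Σ_{j ≠ i} exp(θ(u i)(v j)/τ) + Σ_{j ≠ i} exp(θ(u i)(u j)/τ) ≥ pos(u,v,i) + neg(u,v,i), where pos(u,v,i) = exp(θ(u i)(v i)/τ) + Σ_{j ∈ N_u(i)} exp(θ(u i)(u j)/τ)·S i j and neg(u,v,i) = Σ_{j ∉ {i} ∪ N_v(i)} exp(θ(u i)(v j)/τ) + Σ_{j ∉ {i} ∪ N_u(i)} exp(θ(u i)(u j)/τ). -/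
/-- The HomoGCL positive term for node `i` (view order `u, v`, neighbor set `Nu`). -/
noncomputable def posTerm {N d' : ℕ} (u v : Fin N → EuclideanSpace ℝ (Fin d'))
    (θ : EuclideanSpace ℝ (Fin d') → EuclideanSpace ℝ (Fin d') → ℝ) (τ : ℝ)
    (S : Fin N → Fin N → ℝ) (Nu : Fin N → Finset (Fin N)) (i : Fin N) : ℝ :=
  Real.exp (θ (u i) (v i) / τ) + ∑ j ∈ Nu i, Real.exp (θ (u i) (u j) / τ) * S i j

/-- The HomoGCL negative term for node `i` (view order `u, v`, neighbor sets `Nu`, `Nv`). -/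
noncomputable def negTerm {N d' : ℕ} (u v : Fin N → EuclideanSpace ℝ (Fin d'))
    (θ : EuclideanSpace ℝ (Fin d') → EuclideanSpace ℝ (Fin d') → ℝ) (τ : ℝ)
    (Nu Nv : Fin N → Finset (Fin N)) (i : Fin N) : ℝ :=
  ∑ j ∈ Finset.univ \ insert i (Nv i), Real.exp (θ (u i) (v j) / τ) +
    ∑ j ∈ Finset.univ \ insert i (Nu i), Real.exp (θ (u i) (u j) / τ)

/-- the GRACE denominator dominates the HomoGCL denominator. -/
theorem grace_denom_ge_homogcl_denom
    (N d' : ℕ) (hN : 1 ≤ N) (hd' : 1 ≤ d')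
    (u v : Fin N → EuclideanSpace ℝ (Fin d'))
    (θ : EuclideanSpace ℝ (Fin d') → EuclideanSpace ℝ (Fin d') → ℝ)
    (τ : ℝ) (hτ : 0 < τ)
    (S : Fin N → Fin N → ℝ)
    (Nu Nv : Fin N → Finset (Fin N))
    (i : Fin N)
    (hS : ∀ j, 0 ≤ S i j ∧ S i j ≤ 1)
    (hNu : i ∉ Nu i) (hNv : i ∉ Nv i) :
    Real.exp (θ (u i) (v i) / τ) +
        ∑ j ∈ Finset.univ \ {i}, Real.exp (θ (u i) (v j) / τ) +
        ∑ j ∈ Finset.univ \ {i}, Real.exp (θ (u i) (u j) / τ) ≥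
      posTerm u v θ τ S Nu i + negTerm u v θ τ Nu Nv i := by
  have hsub : Nu i ⊆ Finset.univ \ {i} := by
    intro j hj
    simp only [Finset.mem_sdiff, Finset.mem_univ, Finset.mem_singleton, true_and]
    rintro rfl; exact hNu hj
  have hset : (Finset.univ \ {i}) \ Nu i = Finset.univ \ insert i (Nu i) := by
    ext j; simp [and_comm, and_assoc]
  have hsplit := Finset.sum_sdiff (f := fun j => Real.exp (θ (u i) (u j) / τ)) hsub
  rw [hset] at hsplit
  have h1 : ∑ j ∈ Finset.univ \ insert i (Nv i), Real.exp (θ (u i) (v j) / τ) ≤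
      ∑ j ∈ Finset.univ \ {i}, Real.exp (θ (u i) (v j) / τ) := by
    apply Finset.sum_le_sum_of_subset_of_nonneg
    · intro j hj
      simp only [Finset.mem_sdiff, Finset.mem_univ, Finset.mem_singleton, true_and,
        Finset.mem_insert] at hj ⊢
      tauto
    · intros; positivity
  have h2 : ∑ j ∈ Nu i, Real.exp (θ (u i) (u j) / τ) * S i j ≤
      ∑ j ∈ Nu i, Real.exp (θ (u i) (u j) / τ) := by
    apply Finset.sum_le_sum
    intro j _
    have := (hS j).2
    nlinarith [Real.exp_pos (θ (u i) (u j) / τ)]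
  unfold posTerm negTerm
  linarith
end

section
/- For every node i, if 0 ≤ S i j ≤ 1 for all j, i ∉ N_u(i), and i ∉ N_v(i), then the GRACE per-node loss is at most the HomoGCL per-node loss: ℓ(u_i, v_i) ≤ ℓ_cont(u_i, v_i), i.e. log( exp(θ(u i)(v i)/τ) / ( exp(θ(u i)(v i)/τ) + Σ_{j ≠ i} exp(θ(u i)(v j)/τ) + Σ_{j ≠ i} exp(θ(u i)(u j)/τ) ) ) ≤ log( pos(u,v,i) / (pos(u,v,i) + neg(u,v,i)) ). -/
/-- the GRACE per-node loss is at most the HomoGCL per-node loss,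
`ℓ(u_i, v_i) ≤ ℓ_cont(u_i, v_i)`. -/
theorem grace_loss_le_homogcl_loss
    (N d' : ℕ) (hN : 1 ≤ N) (hd' : 1 ≤ d')
    (u v : Fin N → EuclideanSpace ℝ (Fin d'))
    (θ : EuclideanSpace ℝ (Fin d') → EuclideanSpace ℝ (Fin d') → ℝ)
    (τ : ℝ) (hτ : 0 < τ)
    (S : Fin N → Fin N → ℝ)
    (Nu Nv : Fin N → Finset (Fin N))
    (i : Fin N)
    (hS : ∀ j, 0 ≤ S i j ∧ S i j ≤ 1)
    (hNu : i ∉ Nu i) (hNv : i ∉ Nv i) :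
    Real.log (Real.exp (θ (u i) (v i) / τ) /
        (Real.exp (θ (u i) (v i) / τ) +
          ∑ j ∈ Finset.univ \ {i}, Real.exp (θ (u i) (v j) / τ) +
          ∑ j ∈ Finset.univ \ {i}, Real.exp (θ (u i) (u j) / τ))) ≤
      Real.log (posTerm u v θ τ S Nu i /
        (posTerm u v θ τ S Nu i + negTerm u v θ τ Nu Nv i)) := by
  set a := Real.exp (θ (u i) (v i) / τ) with ha
  have haP : 0 < a := Real.exp_pos _
  set P := posTerm u v θ τ S Nu i with hP
  set n := negTerm u v θ τ Nu Nv i with hn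
  set Bv := ∑ j ∈ Finset.univ \ {i}, Real.exp (θ (u i) (v j) / τ) with hBv
  set Bu := ∑ j ∈ Finset.univ \ {i}, Real.exp (θ (u i) (u j) / τ) with hBu
  have hBvnn : 0 ≤ Bv := Finset.sum_nonneg fun j _ => (Real.exp_pos _).le
  have hBunn : 0 ≤ Bu := Finset.sum_nonneg fun j _ => (Real.exp_pos _).le
  have haP' : a ≤ P := by
    rw [hP, posTerm]
    have : 0 ≤ ∑ j ∈ Nu i, Real.exp (θ (u i) (u j) / τ) * S i j :=
      Finset.sum_nonneg fun j _ => mul_nonneg (Real.exp_pos _).le (hS j).1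
    linarith
  have hPpos : 0 < P := lt_of_lt_of_le haP haP'
  have hnnn : 0 ≤ n := by
    rw [hn, negTerm]
    have h1 : 0 ≤ ∑ j ∈ Finset.univ \ insert i (Nv i), Real.exp (θ (u i) (v j) / τ) :=
      Finset.sum_nonneg fun j _ => (Real.exp_pos _).le
    have h2 : 0 ≤ ∑ j ∈ Finset.univ \ insert i (Nu i), Real.exp (θ (u i) (u j) / τ) :=
      Finset.sum_nonneg fun j _ => (Real.exp_pos _).le
    linarith
  have hPn : P + n ≤ a + Bv + Bu := by
    have hsubNu : Nu i ⊆ Finset.univ \ {i} := by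
      intro j hj
      simp only [Finset.mem_sdiff, Finset.mem_univ, Finset.mem_singleton, true_and]
      intro h; subst h; exact hNu hj
    have hset : Finset.univ \ insert i (Nu i) = (Finset.univ \ {i}) \ Nu i := by
      ext j; simp [Finset.mem_sdiff]
    have hsplit : ∑ j ∈ (Finset.univ \ {i}) \ Nu i, Real.exp (θ (u i) (u j) / τ) +
        ∑ j ∈ Nu i, Real.exp (θ (u i) (u j) / τ) = Bu :=
      Finset.sum_sdiff hsubNu
    have hS' : ∑ j ∈ Nu i, Real.exp (θ (u i) (u j) / τ) * S i j ≤
        ∑ j ∈ Nu i, Real.exp (θ (u i) (u j) / τ) :=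
      Finset.sum_le_sum fun j _ => mul_le_of_le_one_right (Real.exp_pos _).le (hS j).2
    have hv : ∑ j ∈ Finset.univ \ insert i (Nv i), Real.exp (θ (u i) (v j) / τ) ≤ Bv := by
      apply Finset.sum_le_sum_of_subset_of_nonneg
      · intro j hj
        simp only [Finset.mem_sdiff, Finset.mem_univ, Finset.mem_insert,
          Finset.mem_singleton, true_and] at hj ⊢
        tauto
      · exact fun j _ _ => (Real.exp_pos _).le
    rw [hP, posTerm, hn, negTerm, hset]
    linarith
  have hDpos : 0 < a + Bv + Bu := by linarith
  have hPnpos : 0 < P + n := by linarith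
  apply Real.log_le_log (div_pos haP hDpos)
  rw [div_le_div_iff₀ hDpos hPnpos]
  nlinarith
end

section
/- (First inequality of Theorem 1.) If 0 ≤ S i j = S j i ≤ 1 for all i, j, i ∉ N_u(i), and i ∉ N_v(i) for all i, then the GRACE objective is at most the HomoGCL objective: (1/(2N)) Σ_{i=1}^{N} ( ℓ(u_i, v_i) + ℓ(v_i, u_i) ) ≤ (1/(2N)) Σ_{i=1}^{N} ( ℓ_cont(u_i, v_i) + ℓ_cont(v_i, u_i) ), where ℓ(v_i, u_i) and ℓ_cont(v_i, u_i) are obtained from ℓ(u_i, v_i) and ℓ_cont(u_i, v_i) by exchanging the roles of u and v (and of N_u(i) and N_v(i)). -/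
/-- The HomoGCL per-node loss `ℓ_cont(u_i, v_i)`. -/
noncomputable def lCont {N d' : ℕ} (u v : Fin N → EuclideanSpace ℝ (Fin d'))
    (θ : EuclideanSpace ℝ (Fin d') → EuclideanSpace ℝ (Fin d') → ℝ) (τ : ℝ)
    (S : Fin N → Fin N → ℝ) (Nu Nv : Fin N → Finset (Fin N)) (i : Fin N) : ℝ :=
  Real.log (posTerm u v θ τ S Nu i /
    (posTerm u v θ τ S Nu i + negTerm u v θ τ Nu Nv i))

/-- The GRACE per-node loss `ℓ(u_i, v_i)`. -/
noncomputable def lGrace {N d' : ℕ} (u v : Fin N → EuclideanSpace ℝ (Fin d'))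
    (θ : EuclideanSpace ℝ (Fin d') → EuclideanSpace ℝ (Fin d') → ℝ) (τ : ℝ)
    (i : Fin N) : ℝ :=
  Real.log (Real.exp (θ (u i) (v i) / τ) /
    (Real.exp (θ (u i) (v i) / τ) +
      ∑ j ∈ Finset.univ \ {i}, Real.exp (θ (u i) (v j) / τ) +
      ∑ j ∈ Finset.univ \ {i}, Real.exp (θ (u i) (u j) / τ)))


lemma per_node_grace_le_homogcl {N d' : ℕ}
    (u v : Fin N → EuclideanSpace ℝ (Fin d'))
    (θ : EuclideanSpace ℝ (Fin d') → EuclideanSpace ℝ (Fin d') → ℝ)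
    (τ : ℝ) (S : Fin N → Fin N → ℝ) (Nu Nv : Fin N → Finset (Fin N))
    (hS0 : ∀ i j, 0 ≤ S i j) (hS1 : ∀ i j, S i j ≤ 1)
    (hNu : ∀ i, i ∉ Nu i) (hNv : ∀ i, i ∉ Nv i) (i : Fin N) :
    lGrace u v θ τ i ≤ lCont u v θ τ S Nu Nv i := by
  set e := Real.exp (θ (u i) (v i) / τ) with he
  set A := ∑ j ∈ Finset.univ \ {i}, Real.exp (θ (u i) (v j) / τ) with hA
  set B := ∑ j ∈ Finset.univ \ {i}, Real.exp (θ (u i) (u j) / τ) with hB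
  have hepos : 0 < e := Real.exp_pos _
  have hP0 : 0 ≤ ∑ j ∈ Nu i, Real.exp (θ (u i) (u j) / τ) * S i j :=
    Finset.sum_nonneg fun j _ => mul_nonneg (Real.exp_pos _).le (hS0 i j)
  have hpospos : 0 < posTerm u v θ τ S Nu i := by
    have : e ≤ posTerm u v θ τ S Nu i := le_add_of_nonneg_right hP0
    linarith
  have hneg0 : 0 ≤ negTerm u v θ τ Nu Nv i := by
    unfold negTerm
    have h1 : (0:ℝ) ≤ ∑ j ∈ Finset.univ \ insert i (Nv i), Real.exp (θ (u i) (v j) / τ) :=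
      Finset.sum_nonneg fun j _ => (Real.exp_pos _).le
    have h2 : (0:ℝ) ≤ ∑ j ∈ Finset.univ \ insert i (Nu i), Real.exp (θ (u i) (u j) / τ) :=
      Finset.sum_nonneg fun j _ => (Real.exp_pos _).le
    linarith
  -- denominator bound
  have hsub : Nu i ⊆ Finset.univ \ {i} := by
    intro j hj
    simp only [Finset.mem_sdiff, Finset.mem_univ, Finset.mem_singleton, true_and]
    exact fun h => hNu i (h ▸ hj)
  have hsdiff : (Finset.univ \ {i}) \ Nu i = Finset.univ \ insert i (Nu i) := by
    ext j; simp [Finset.mem_sdiff, Finset.mem_insert, not_or, and_assoc]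
  have hBsplit : (∑ j ∈ Nu i, Real.exp (θ (u i) (u j) / τ)) +
      (∑ j ∈ Finset.univ \ insert i (Nu i), Real.exp (θ (u i) (u j) / τ)) = B := by
    rw [hB, ← Finset.sum_sdiff hsub, hsdiff]; ring
  have hPle : (∑ j ∈ Nu i, Real.exp (θ (u i) (u j) / τ) * S i j) ≤
      ∑ j ∈ Nu i, Real.exp (θ (u i) (u j) / τ) :=
    Finset.sum_le_sum fun j _ =>
      mul_le_of_le_one_right (Real.exp_pos _).le (hS1 i j)
  have hAle : (∑ j ∈ Finset.univ \ insert i (Nv i), Real.exp (θ (u i) (v j) / τ)) ≤ A := by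
    rw [hA]
    apply Finset.sum_le_sum_of_subset_of_nonneg
    · apply Finset.sdiff_subset_sdiff (le_refl _)
      intro j hj; simp only [Finset.mem_singleton] at hj; simp [hj]
    · intro j _ _; exact (Real.exp_pos _).le
  have hden : posTerm u v θ τ S Nu i + negTerm u v θ τ Nu Nv i ≤ e + A + B := by
    unfold posTerm negTerm
    rw [← he]
    nlinarith [hBsplit, hPle, hAle]
  have hdenpos : 0 < posTerm u v θ τ S Nu i + negTerm u v θ τ Nu Nv i := by linarith
  have hnum : e ≤ posTerm u v θ τ S Nu i := le_add_of_nonneg_right hP0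
  have hgden : (0:ℝ) < e + A + B := lt_of_lt_of_le hdenpos hden
  unfold lGrace lCont
  rw [← he, ← hA, ← hB]
  apply Real.log_le_log (div_pos hepos hgden)
  exact div_le_div₀ hpospos.le hnum hdenpos hden

/-- first inequality of Theorem 1: the GRACE objective is at most
the HomoGCL objective. -/
theorem grace_objective_le_homogcl_objective
    (N d' : ℕ) (hN : 1 ≤ N) (hd' : 1 ≤ d')
    (u v : Fin N → EuclideanSpace ℝ (Fin d'))
    (θ : EuclideanSpace ℝ (Fin d') → EuclideanSpace ℝ (Fin d') → ℝ)
    (τ : ℝ) (hτ : 0 < τ)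
    (S : Fin N → Fin N → ℝ)
    (Nu Nv : Fin N → Finset (Fin N))
    (hS0 : ∀ i j, 0 ≤ S i j) (hS1 : ∀ i j, S i j ≤ 1)
    (hSsymm : ∀ i j, S i j = S j i)
    (hNu : ∀ i, i ∉ Nu i) (hNv : ∀ i, i ∉ Nv i) :
    (1 / (2 * (N : ℝ))) * ∑ i, (lGrace u v θ τ i + lGrace v u θ τ i) ≤
      (1 / (2 * (N : ℝ))) *
        ∑ i, (lCont u v θ τ S Nu Nv i + lCont v u θ τ S Nv Nu i) := by
  apply mul_le_mul_of_nonneg_left _ (by positivity)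
  apply Finset.sum_le_sum
  intro i _
  exact add_le_add
    (per_node_grace_le_homogcl u v θ τ S Nu Nv hS0 hS1 hNu hNv i)
    (per_node_grace_le_homogcl v u θ τ S Nv Nu hS0 hS1 hNv hNu i)
end
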